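/- Let u be a nonzero vector in ℝⁿ and let f : ℝⁿ → ℝ be smooth and compactly supported. Then for every x ∈ ℝⁿ: (a) the directional derivative of the divergent beam transform 𝒳_u f along u at x equals f(x), i.e. fderiv ℝ (𝒳_u f) x u = f x; and (b) the divergent beam transform of the directional derivative of f along u equals f, i.e. (𝒳_u (fun y => fderiv ℝ f y u)) x = f x. In other words, 𝒟_u ∘ 𝒳_u and 𝒳_u ∘ 𝒟_u both act as the identity on compactly supported smooth functions. -/

import Mathlib

open MeasureTheory

/-- The divergent beam transform `𝒳_u f` on `ℝⁿ`:
`(𝒳_u f)(x) = ∫_{-∞}^0 f(x + t • u) dt`. -/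
noncomputable def beam {n : ℕ} (u : EuclideanSpace ℝ (Fin n))
    (f : EuclideanSpace ℝ (Fin n) → ℝ) (x : EuclideanSpace ℝ (Fin n)) : ℝ :=
  ∫ t in Set.Iio (0 : ℝ), f (x + t • u)

private lemma line_support {n : ℕ} {u : EuclideanSpace ℝ (Fin n)} (hu : u ≠ 0)
    {V : Type*} [NormedAddCommGroup V] (h : EuclideanSpace ℝ (Fin n) → V)
    (hs : HasCompactSupport h) (y : EuclideanSpace ℝ (Fin n)) :
    HasCompactSupport (fun t : ℝ => h (y + t • u)) := by
  obtain ⟨R, hR⟩ := hs.isBounded.subset_closedBall 0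
  have hupos : (0 : ℝ) < ‖u‖ := norm_pos_iff.mpr hu
  apply HasCompactSupport.intro (isCompact_Icc (a := -((R + ‖y‖) / ‖u‖))
    (b := (R + ‖y‖) / ‖u‖))
  intro t ht
  by_contra h0
  apply ht
  have hmem : y + t • u ∈ tsupport h := subset_tsupport _ h0
  have h1 : ‖y + t • u‖ ≤ R := by simpa using hR hmem
  have h2 : |t| * ‖u‖ ≤ R + ‖y‖ := by
    have : ‖t • u‖ = ‖(y + t • u) - y‖ := by rw [add_sub_cancel_left]
    have h3 : ‖t • u‖ ≤ R + ‖y‖ := by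
      rw [this]
      calc ‖(y + t • u) - y‖ ≤ ‖y + t • u‖ + ‖y‖ := norm_sub_le _ _
        _ ≤ R + ‖y‖ := by linarith
    simpa [norm_smul, abs_of_nonneg] using h3
  have h4 : |t| ≤ (R + ‖y‖) / ‖u‖ := (le_div_iff₀ hupos).2 h2
  exact Set.mem_Icc.2 (abs_le.mp h4)

private lemma line_hasDerivAt {n : ℕ} {u : EuclideanSpace ℝ (Fin n)}
    {f : EuclideanSpace ℝ (Fin n) → ℝ} (hf : ContDiff ℝ (⊤ : ℕ∞) f)
    (y : EuclideanSpace ℝ (Fin n)) (t : ℝ) :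
    HasDerivAt (fun s : ℝ => f (y + s • u)) (fderiv ℝ f (y + t • u) u) t := by
  have hl : HasDerivAt (fun s : ℝ => y + s • u) u t := by
    simpa using ((hasDerivAt_id t).smul_const u).const_add y
  exact ((hf.differentiable (by simp) (y + t • u)).hasFDerivAt).comp_hasDerivAt t hl

private lemma beam_of_deriv {n : ℕ} {u : EuclideanSpace ℝ (Fin n)} (hu : u ≠ 0)
    {f : EuclideanSpace ℝ (Fin n) → ℝ} (hf : ContDiff ℝ (⊤ : ℕ∞) f)
    (hsupp : HasCompactSupport f) (y : EuclideanSpace ℝ (Fin n)) :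
    ∫ t in Set.Iio (0 : ℝ), fderiv ℝ f (y + t • u) u = f y := by
  have hlinecont : Continuous fun t : ℝ => y + t • u :=
    continuous_const.add (continuous_id.smul continuous_const)
  have hcont' : Continuous fun t : ℝ => fderiv ℝ f (y + t • u) u :=
    ((hf.continuous_fderiv (by simp)).comp hlinecont).clm_apply continuous_const
  have hcsD : HasCompactSupport fun z => fderiv ℝ f z u :=
    hsupp.fderiv_apply ℝ u
  have hcs : HasCompactSupport (fun t : ℝ => fderiv ℝ f (y + t • u) u) :=
    line_support hu (fun z => fderiv ℝ f z u) hcsD y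
  have hint : IntegrableOn (fun t : ℝ => fderiv ℝ f (y + t • u) u) (Set.Iic 0) :=
    (hcont'.integrable_of_hasCompactSupport hcs).integrableOn
  have htends : Filter.Tendsto (fun t : ℝ => f (y + t • u)) Filter.atBot (nhds 0) := by
    have hgs : HasCompactSupport (fun t : ℝ => f (y + t • u)) := line_support hu f hsupp y
    obtain ⟨T, hT⟩ := hgs.isBounded.subset_closedBall 0
    refine tendsto_const_nhds.congr' ?_
    filter_upwards [Filter.eventually_lt_atBot (-T)] with t ht
    refine (image_eq_zero_of_notMem_tsupport (f := fun s : ℝ => f (y + s • u)) ?_).symm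
    intro hmem
    have : |t| ≤ T := by simpa [Real.norm_eq_abs] using hT hmem
    have : -T ≤ t := neg_le_of_abs_le this
    linarith
  rw [setIntegral_congr_set Iio_ae_eq_Iic]
  have := integral_Iic_of_hasDerivAt_of_tendsto' (a := (0 : ℝ))
    (fun t _ => line_hasDerivAt hf y t) hint htends
  simpa using this

/-- `𝒟_u ∘ 𝒳_u` and `𝒳_u ∘ 𝒟_u` act as the identity on smooth
compactly supported functions. -/
theorem beam_dirDeriv_inverse {n : ℕ} (u : EuclideanSpace ℝ (Fin n)) (hu : u ≠ 0)
    (f : EuclideanSpace ℝ (Fin n) → ℝ) (hf : ContDiff ℝ (⊤ : ℕ∞) f)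
    (hsupp : HasCompactSupport f) (x : EuclideanSpace ℝ (Fin n)) :
    fderiv ℝ (beam u f) x u = f x ∧ beam u (fun y => fderiv ℝ f y u) x = f x := by
  have hcontf := hf.continuous
  have hcontf' : Continuous (fderiv ℝ f) := hf.continuous_fderiv (by simp)
  have hupos : (0 : ℝ) < ‖u‖ := norm_pos_iff.mpr hu
  constructor
  · -- (a)
    obtain ⟨C, hC⟩ := hcontf'.bounded_above_of_compact_support (hsupp.fderiv ℝ)
    obtain ⟨R, hR⟩ := (hsupp.fderiv ℝ).isBounded.subset_closedBall 0
    set T : ℝ := (R + ‖x‖ + 1) / ‖u‖ with hT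
    have hlinecont : ∀ y : EuclideanSpace ℝ (Fin n),
        Continuous fun t : ℝ => y + t • u := fun y =>
      continuous_const.add (continuous_id.smul continuous_const)
    have hcsF' : HasCompactSupport (fun t : ℝ => fderiv ℝ f (x + t • u)) :=
      line_support hu (fderiv ℝ f) (hsupp.fderiv ℝ) x
    have hcontF' : Continuous fun t : ℝ => fderiv ℝ f (x + t • u) :=
      hcontf'.comp (hlinecont x)
    have hintCLM : Integrable (fun t : ℝ => fderiv ℝ f (x + t • u))
        (volume.restrict (Set.Iio (0 : ℝ))) :=
      (hcontF'.integrable_of_hasCompactSupport hcsF').restrict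
    have hdF : HasFDerivAt (beam u f)
        (∫ t in Set.Iio (0 : ℝ), fderiv ℝ f (x + t • u)) x := by
      refine hasFDerivAt_integral_of_dominated_of_fderiv_le (s := Metric.ball x 1)
        (F := fun y t => f (y + t • u)) (F' := fun y t => fderiv ℝ f (y + t • u))
        (bound := Set.indicator (Set.Icc (-T) T) fun _ => C) (Metric.ball_mem_nhds x one_pos)
        (Filter.Eventually.of_forall fun y =>
          (hcontf.comp (hlinecont y)).aestronglyMeasurable) ?_ ?_ ?_ ?_ ?_
      · exact ((hcontf.comp (hlinecont x)).integrable_of_hasCompactSupport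
          (line_support hu f hsupp x)).restrict
      · exact hcontF'.aestronglyMeasurable
      · refine Filter.Eventually.of_forall fun t y hy => ?_
        by_cases ht : t ∈ Set.Icc (-T) T
        · rw [Set.indicator_of_mem ht]; exact hC _
        · rw [Set.indicator_of_notMem ht]
          have hz : y + t • u ∉ tsupport (fderiv ℝ f) := by
            intro hmem
            apply ht
            have h1 : ‖y + t • u‖ ≤ R := by simpa using hR hmem
            have hyx : ‖y‖ < ‖x‖ + 1 := by
              calc ‖y‖ ≤ ‖x‖ + ‖y - x‖ := by
                    simpa using norm_add_le x (y - x)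
                _ < ‖x‖ + 1 := by
                    have := mem_ball_iff_norm.mp hy
                    linarith
            have h2 : |t| * ‖u‖ ≤ R + ‖x‖ + 1 := by
              have h3 : ‖(y + t • u) - y‖ ≤ ‖y + t • u‖ + ‖y‖ := norm_sub_le _ _
              rw [add_sub_cancel_left, norm_smul, Real.norm_eq_abs] at h3
              linarith
            have h4 : |t| ≤ T := (le_div_iff₀ hupos).2 h2
            exact Set.mem_Icc.2 (abs_le.mp h4)
          show ‖fderiv ℝ f (y + t • u)‖ ≤ 0
          rw [image_eq_zero_of_notMem_tsupport hz, norm_zero]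
      · exact (((integrableOn_const measure_Icc_lt_top.ne).integrable_indicator
          measurableSet_Icc)).restrict
      · refine Filter.Eventually.of_forall fun t y hy => ?_
        have h1 : HasFDerivAt (fun z : EuclideanSpace ℝ (Fin n) => z + t • u)
            (ContinuousLinearMap.id ℝ _) y := (hasFDerivAt_id y).add_const (t • u)
        have := ((hf.differentiable (by simp) (y + t • u)).hasFDerivAt).comp y h1
        simpa [Function.comp_def] using this
    rw [hdF.fderiv, ContinuousLinearMap.integral_apply hintCLM]
    exact beam_of_deriv hu hf hsupp x
  · exact beam_of_deriv hu hf hsupp x
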